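/- In the Wait-and-Go model, the return probability to the Idle state satisfies the combinatorial formula: for k ≥ 1, φ(k) = (1-r)^{k-1} + ∑_{ε=1}^{⌊(k-1)/(H+2)⌋} C(k-1-(H+1)ε, ε)·r^ε·(1-r)^{k-1-(H+2)ε}, where φ(k) = Prob(x_k = 0 | x_1 = 0), i.e., φ counts sequences of steps composed of blocks of length 1 (stay idle, weight 1-r) and blocks of length H+2 (transmit cycle, weight r), tiling an interval of length k-1. -/

import Mathlib

noncomputable def wagT (H : ℕ) (r : ℝ) (n : ℕ) : ℝ :=
  ∑ ε ∈ Finset.range (n+1),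
    if (H+2)*ε ≤ n then ((n - (H+1)*ε).choose ε : ℝ) * r^ε * (1-r)^(n-(H+2)*ε) else 0

lemma wagT_zero (H : ℕ) (r : ℝ) : wagT H r 0 = 1 := by
  simp [wagT]

lemma wag_term_rec (H : ℕ) (r : ℝ) (m e : ℕ) :
    (if (H+2)*(e+1) ≤ m+1 then
        ((m+1 - (H+1)*(e+1)).choose (e+1) : ℝ) * r^(e+1) * (1-r)^(m+1-(H+2)*(e+1)) else 0)
    = (1-r) * (if (H+2)*(e+1) ≤ m then
        ((m - (H+1)*(e+1)).choose (e+1) : ℝ) * r^(e+1) * (1-r)^(m-(H+2)*(e+1)) else 0)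
      + (if H+2 ≤ m+1 then
          r * (if (H+2)*e ≤ m+1-(H+2) then
            ((m+1-(H+2) - (H+1)*e).choose e : ℝ) * r^e * (1-r)^(m+1-(H+2)-(H+2)*e) else 0)
        else 0) := by
  have hmul1 : (H+2)*(e+1) = (H+2)*e + (H+2) := by ring
  have hmul2 : (H+1)*(e+1) = (H+1)*e + (H+1) := by ring
  have hl1 : (H+1)*(e+1) + (e+1) = (H+2)*(e+1) := by ring
  have hl2 : (H+1)*e + e = (H+2)*e := by ring
  by_cases h1 : (H+2)*(e+1) ≤ m+1
  · have hd : H+2 ≤ m+1 := by omega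
    have hc2 : (H+2)*e ≤ m+1-(H+2) := by omega
    rw [if_pos h1, if_pos hd, if_pos hc2]
    by_cases h3 : (H+2)*(e+1) ≤ m
    · rw [if_pos h3]
      have i1 : m + 1 - (H+1)*(e+1) = (m - (H+1)*(e+1)) + 1 := by omega
      have i2 : m+1-(H+2) - (H+1)*e = m - (H+1)*(e+1) := by omega
      have i3 : m+1-(H+2)*(e+1) = (m - (H+2)*(e+1)) + 1 := by omega
      have i4 : m+1-(H+2)-(H+2)*e = (m - (H+2)*(e+1)) + 1 := by omega
      rw [i1, i2, i3, i4, Nat.choose_succ_succ]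
      push_cast
      ring
    · have he : (H+2)*(e+1) = m+1 := by omega
      rw [if_neg h3]
      have i1 : m + 1 - (H+1)*(e+1) = e+1 := by omega
      have i2 : m+1-(H+2) - (H+1)*e = e := by omega
      have i3 : m+1-(H+2)*(e+1) = 0 := by omega
      have i4 : m+1-(H+2)-(H+2)*e = 0 := by omega
      rw [i1, i2, i3, i4]
      simp [Nat.choose_self]
      ring
  · rw [if_neg h1, if_neg (by omega : ¬ (H+2)*(e+1) ≤ m)]
    by_cases hd : H+2 ≤ m+1
    · rw [if_pos hd, if_neg (by omega : ¬ (H+2)*e ≤ m+1-(H+2))]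
      ring
    · rw [if_neg hd]
      ring

lemma wagT_rec (H : ℕ) (r : ℝ) (m : ℕ) :
    wagT H r (m+1) = (1-r) * wagT H r m
      + (if H+2 ≤ m+1 then r * wagT H r (m+1-(H+2)) else 0) := by
  have key : wagT H r (m+1)
      = (∑ i ∈ Finset.range (m+1),
          ((1-r) * (if (H+2)*(i+1) ≤ m then
              ((m - (H+1)*(i+1)).choose (i+1) : ℝ) * r^(i+1) * (1-r)^(m-(H+2)*(i+1)) else 0)
            + (if H+2 ≤ m+1 then
                r * (if (H+2)*i ≤ m+1-(H+2) then
                  ((m+1-(H+2) - (H+1)*i).choose i : ℝ) * r^i * (1-r)^(m+1-(H+2)-(H+2)*i) else 0)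
              else 0)))
        + (1-r)^(m+1) := by
    rw [wagT, Finset.sum_range_succ']
    congr 1
    · exact Finset.sum_congr rfl fun i _ => wag_term_rec H r m i
    · simp
  have e1 : (∑ i ∈ Finset.range (m+1),
      (if (H+2)*(i+1) ≤ m then
          ((m - (H+1)*(i+1)).choose (i+1) : ℝ) * r^(i+1) * (1-r)^(m-(H+2)*(i+1)) else 0))
      = wagT H r m - (1-r)^m := by
    rw [Finset.sum_range_succ]
    have hm1 : m+1 ≤ (H+2)*(m+1) := Nat.le_mul_of_pos_left _ (by omega)
    rw [if_neg (by omega : ¬ (H+2)*(m+1) ≤ m), add_zero]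
    have : wagT H r m = (∑ i ∈ Finset.range m,
        (if (H+2)*(i+1) ≤ m then
          ((m - (H+1)*(i+1)).choose (i+1) : ℝ) * r^(i+1) * (1-r)^(m-(H+2)*(i+1)) else 0))
        + (1-r)^m := by
      rw [wagT, Finset.sum_range_succ']
      congr 1
      simp
    rw [this]; ring
  rw [key, Finset.sum_add_distrib, ← Finset.mul_sum, e1]
  by_cases hd : H+2 ≤ m+1
  · simp only [if_pos hd]
    rw [← Finset.mul_sum]
    have e2 : (∑ i ∈ Finset.range (m+1),
        (if (H+2)*i ≤ m+1-(H+2) then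
          ((m+1-(H+2) - (H+1)*i).choose i : ℝ) * r^i * (1-r)^(m+1-(H+2)-(H+2)*i) else 0))
        = wagT H r (m+1-(H+2)) := by
      rw [wagT]
      refine (Finset.sum_subset (Finset.range_subset_range.mpr (by omega)) ?_).symm
      intro i hi hni
      simp only [Finset.mem_range, not_lt] at hi hni
      have : i ≤ (H+2)*i := Nat.le_mul_of_pos_left _ (by omega)
      rw [if_neg (by omega)]
    rw [e2]; ring
  · simp only [if_neg hd]
    simp only [Finset.sum_const_zero]
    ring

lemma wagT_eq (H : ℕ) (r : ℝ) (n : ℕ) :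
    wagT H r n = (1-r)^n + ∑ ε ∈ Finset.Icc 1 (n/(H+2)),
      ((n - (H+1)*ε).choose ε : ℝ) * r^ε * (1-r)^(n-(H+2)*ε) := by
  rw [wagT, Finset.sum_range_succ', add_comm]
  congr 1
  · simp
  · have step1 : (∑ i ∈ Finset.range n,
        (if (H+2)*(i+1) ≤ n then
          ((n - (H+1)*(i+1)).choose (i+1) : ℝ) * r^(i+1) * (1-r)^(n-(H+2)*(i+1)) else 0))
        = ∑ ε ∈ Finset.Icc 1 n,
        (if (H+2)*ε ≤ n then ((n - (H+1)*ε).choose ε : ℝ) * r^ε * (1-r)^(n-(H+2)*ε) else 0) := by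
      rw [show Finset.Icc 1 n = Finset.Ico 1 (n+1) by rw [Finset.Ico_add_one_right_eq_Icc],
        Finset.sum_Ico_eq_sum_range]
      simp [add_comm]
    rw [step1]
    refine (Finset.sum_subset (Finset.Icc_subset_Icc_right (Nat.div_le_self n (H+2))) ?_).symm.trans ?_
    · intro x hx hnx
      simp only [Finset.mem_Icc] at hx hnx
      have hx2 : n/(H+2) < x := by omega
      have hcm : x*(H+2) = (H+2)*x := by ring
      have : ¬ (H+2)*x ≤ n := by
        intro hc
        have := (Nat.le_div_iff_mul_le (by omega : 0 < H+2)).mpr (by omega : x*(H+2) ≤ n)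
        omega
      rw [if_neg this]
    · refine Finset.sum_congr rfl ?_
      intro x hx
      simp only [Finset.mem_Icc] at hx
      have : (H+2)*x ≤ n := by
        have h2 := (Nat.le_div_iff_mul_le (by omega : 0 < H+2)).mp hx.2
        have hcm : x*(H+2) = (H+2)*x := by ring
        omega
      rw [if_pos this]

theorem wag_return_probability_closed_form (H : ℕ) (hH : 1 ≤ H)
    (r : ℝ) (hr : 0 < r) (hr1 : r < 1) (φ : ℤ → ℝ)
    (hneg : ∀ k : ℤ, k ≤ 0 → φ k = 0) (hone : φ 1 = 1)
    (hrec : ∀ k : ℤ, 2 ≤ k → φ k = (1 - r) * φ (k - 1) + r * φ (k - H - 2)) :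
    ∀ k : ℕ, 1 ≤ k →
      φ k = (1 - r) ^ (k - 1)
        + ∑ ε ∈ Finset.Icc 1 ((k - 1) / (H + 2)),
            ((k - 1 - (H + 1) * ε).choose ε : ℝ) * r ^ ε * (1 - r) ^ (k - 1 - (H + 2) * ε) := by
  suffices h : ∀ k : ℕ, 1 ≤ k → φ k = wagT H r (k-1) by
    intro k hk
    rw [h k hk, wagT_eq]
  intro k
  induction k using Nat.strong_induction_on with
  | _ k ih =>
    intro hk
    rcases eq_or_lt_of_le hk with h1 | h2
    · rw [← h1]
      simpa [wagT_zero] using hone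
    · have hk2 : 2 ≤ k := h2
      have hrk := hrec k (by exact_mod_cast hk2)
      have e1 : (k:ℤ) - 1 = ((k-1 : ℕ) : ℤ) := by omega
      have hφ1 : φ ((k:ℤ)-1) = wagT H r (k-1-1) := by
        rw [e1]
        exact ih (k-1) (by omega) (by omega)
      obtain ⟨m, hm⟩ : ∃ m, k - 1 = m + 1 := ⟨k-2, by omega⟩
      by_cases hH2 : H + 2 ≤ k - 1
      · have e2 : (k:ℤ) - H - 2 = ((k - (H+2) : ℕ) : ℤ) := by omega
        have hφ2 : φ ((k:ℤ) - H - 2) = wagT H r (k - (H+2) - 1) := by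
          rw [e2, ih (k-(H+2)) (by omega) (by omega)]
        rw [hrk, hφ1, hφ2, hm, wagT_rec, if_pos (by omega : H+2 ≤ m+1)]
        have hm2 : m = k - 1 - 1 := by omega
        have hm3 : m+1-(H+2) = k-(H+2)-1 := by omega
        rw [hm3, hm2, show k-1-1+1-1 = k-1-1 from by omega]
      · have hneg2 : φ ((k:ℤ) - H - 2) = 0 := hneg _ (by omega)
        rw [hrk, hφ1, hneg2, mul_zero, add_zero, hm, wagT_rec,
          if_neg (by omega : ¬ H+2 ≤ m+1), add_zero]
        have hm2 : m = k - 1 - 1 := by omega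
        rw [hm2, show k-1-1+1-1 = k-1-1 from by omega]
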